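/- Let r > 2 and u ∈ L²(ℝ) ∩ L^r(ℝ). Then the concentration function ρ(u,·) is Hölder continuous: there exists C = C(r) such that for all s,t > 0, |ρ(u,t) − ρ(u,s)| ≤ C ‖u‖_{L^r}² |t−s|^{(r−2)/r}. -/

import Mathlib

open MeasureTheory Set
open scoped ENNReal

/-- The concentration function `ρ(u,t) = sup_y ∫_{|x-y|<t} |u|²`. -/
noncomputable def concentration (u : ℝ → ℂ) (t : ℝ) : ℝ :=
  ⨆ y : ℝ, ∫ x in Ioo (y - t) (y + t), ‖u x‖ ^ 2

/-- Hölder estimate on a set of small measure. -/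
lemma holder_piece {u : ℝ → ℂ} {r : ℝ} (hr : 2 < r)
    (hu2 : MemLp u 2 (volume : Measure ℝ))
    (hur : MemLp u (ENNReal.ofReal r) (volume : Measure ℝ))
    {A : Set ℝ} {ℓ : ℝ} (hℓ : 0 ≤ ℓ)
    (hvol : volume A ≤ ENNReal.ofReal ℓ) :
    ∫ x in A, ‖u x‖ ^ 2
      ≤ (eLpNorm u (ENNReal.ofReal r) volume).toReal ^ 2 * ℓ ^ ((r - 2) / r) := by
  have hr0 : (0:ℝ) < r := by linarith
  set p := ENNReal.ofReal r with hp
  have hpt : p.toReal = r := ENNReal.toReal_ofReal hr0.le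
  have h2p : (2 : ℝ≥0∞) ≤ p := by
    rw [hp, show (2 : ℝ≥0∞) = ENNReal.ofReal 2 by simp]
    exact ENNReal.ofReal_le_ofReal hr.le
  have hmem : MemLp u 2 (volume.restrict A) := hu2.restrict A
  set e : ℝ := 1 / 2 - 1 / r with he
  have he0 : 0 ≤ e := by
    rw [he]
    have : 1 / r ≤ 1 / 2 := by
      apply one_div_le_one_div_of_le <;> linarith
    linarith
  -- step 1: express the integral via the L² norm on A
  have heq : ∫ x in A, ‖u x‖ ^ 2
      = (eLpNorm u 2 (volume.restrict A)).toReal ^ 2 := by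
    rw [hmem.eLpNorm_eq_integral_rpow_norm two_ne_zero ENNReal.ofNat_ne_top]
    have h2 : ((2 : ℝ≥0∞)).toReal = ((2 : ℕ) : ℝ) := by norm_num
    rw [h2]
    have hint : 0 ≤ ∫ x in A, ‖u x‖ ^ ((2 : ℕ) : ℝ) :=
      integral_nonneg fun x => Real.rpow_nonneg (norm_nonneg _) _
    rw [ENNReal.toReal_ofReal (Real.rpow_nonneg hint _)]
    rw [← Real.rpow_natCast (_ ^ (((2:ℕ):ℝ))⁻¹) 2, ← Real.rpow_mul hint]
    norm_num
  -- step 2: Hölder / interpolation inequality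
  have hH := eLpNorm_le_eLpNorm_mul_rpow_measure_univ h2p
      (hmem.aestronglyMeasurable) (μ := volume.restrict A)
  rw [Measure.restrict_apply_univ] at hH
  have hexp : 1 / (2 : ℝ≥0∞).toReal - 1 / p.toReal = e := by
    rw [hpt, he]; norm_num
  rw [hexp] at hH
  have hle : eLpNorm u 2 (volume.restrict A)
      ≤ eLpNorm u p volume * ENNReal.ofReal ℓ ^ e :=
    hH.trans (mul_le_mul' (eLpNorm_mono_measure _ Measure.restrict_le_self)
      (ENNReal.rpow_le_rpow hvol he0))
  have hfin : eLpNorm u p volume * ENNReal.ofReal ℓ ^ e ≠ ⊤ := by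
    apply ENNReal.mul_ne_top hur.eLpNorm_ne_top
    exact (ENNReal.rpow_lt_top_of_nonneg he0 ENNReal.ofReal_ne_top).ne
  have hR : (eLpNorm u 2 (volume.restrict A)).toReal
      ≤ (eLpNorm u p volume).toReal * ℓ ^ e := by
    have := ENNReal.toReal_mono hfin hle
    rwa [ENNReal.toReal_mul, ← ENNReal.toReal_rpow, ENNReal.toReal_ofReal hℓ] at this
  rw [heq]
  calc (eLpNorm u 2 (volume.restrict A)).toReal ^ 2
      ≤ ((eLpNorm u p volume).toReal * ℓ ^ e) ^ 2 := by
        apply pow_le_pow_left₀ ENNReal.toReal_nonneg hR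
    _ = (eLpNorm u p volume).toReal ^ 2 * ℓ ^ ((r - 2) / r) := by
        rw [mul_pow, ← Real.rpow_natCast (ℓ ^ e) 2, ← Real.rpow_mul hℓ]
        congr 1
        rw [he]
        field_simp
        ring

/-- For `r > 2` there is a constant `C = C(r)` such that for every
`u ∈ L²(ℝ) ∩ L^r(ℝ)` the concentration function is Hölder continuous:
`|ρ(u,t) − ρ(u,s)| ≤ C ‖u‖_{L^r}² |t−s|^{(r−2)/r}` for all `s, t > 0`. -/
theorem concentration_holder (r : ℝ) (hr : 2 < r) :
    ∃ C : ℝ, ∀ u : ℝ → ℂ,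
      MemLp u 2 (volume : Measure ℝ) →
      MemLp u (ENNReal.ofReal r) (volume : Measure ℝ) →
      ∀ s t : ℝ, 0 < s → 0 < t →
        |concentration u t - concentration u s|
          ≤ C * (eLpNorm u (ENNReal.ofReal r) volume).toReal ^ 2
              * |t - s| ^ ((r - 2) / r) := by
  refine ⟨2, fun u hu2 hur s t hs ht => ?_⟩
  set N : ℝ := (eLpNorm u (ENNReal.ofReal r) volume).toReal with hN
  have hN0 : 0 ≤ N := ENNReal.toReal_nonneg
  -- integrability of ‖u‖²
  have hInt : Integrable (fun x => ‖u x‖ ^ 2) (volume : Measure ℝ) := by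
    have h := hu2.integrable_norm_rpow two_ne_zero ENNReal.ofNat_ne_top
    have h2 : ((2 : ℝ≥0∞)).toReal = ((2 : ℕ) : ℝ) := by norm_num
    rw [h2] at h
    exact h.congr (ae_of_all _ fun x => by simp [Real.rpow_natCast])
  have hnonneg : ∀ x : ℝ, 0 ≤ ‖u x‖ ^ 2 := fun x => by positivity
  set f : ℝ → ℝ → ℝ := fun y τ => ∫ x in Ioo (y - τ) (y + τ), ‖u x‖ ^ 2 with hf
  have hfb : ∀ y τ, f y τ ≤ ∫ x, ‖u x‖ ^ 2 := fun y τ =>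
    setIntegral_le_integral hInt (ae_of_all _ hnonneg)
  have hBdd : ∀ τ : ℝ, BddAbove (range fun y => f y τ) := fun τ =>
    ⟨∫ x, ‖u x‖ ^ 2, by rintro _ ⟨y, rfl⟩; exact hfb y τ⟩
  -- monotonicity in τ
  have hmono : ∀ a b : ℝ, a ≤ b → concentration u a ≤ concentration u b := by
    intro a b hab
    apply ciSup_le
    intro y
    refine le_trans ?_ (le_ciSup (hBdd b) y)
    apply setIntegral_mono_set hInt.integrableOn (ae_of_all _ hnonneg)
    exact HasSubset.Subset.eventuallyLE (Ioo_subset_Ioo (by linarith) (by linarith))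
  -- key estimate for a ≤ b
  have key : ∀ a b : ℝ, 0 < a → a ≤ b →
      concentration u b ≤ concentration u a + 2 * N ^ 2 * (b - a) ^ ((r - 2) / r) := by
    intro a b ha hab
    apply ciSup_le
    intro y
    have hsub : Ioo (y - b) (y + b)
        ⊆ Ioc (y - b) (y - a) ∪ (Ioo (y - a) (y + a) ∪ Ico (y + a) (y + b)) := by
      intro x hx
      simp only [mem_Ioo] at hx
      by_cases h1 : x ≤ y - a
      · exact Or.inl ⟨hx.1, h1⟩
      · push_neg at h1
        by_cases h2 : x < y + a
        · exact Or.inr (Or.inl ⟨h1, h2⟩)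
        · push_neg at h2
          exact Or.inr (Or.inr ⟨h2, hx.2⟩)
    have hd1 : Disjoint (Ioc (y - b) (y - a)) (Ioo (y - a) (y + a) ∪ Ico (y + a) (y + b)) := by
      rw [Set.disjoint_left]
      rintro x hx (h | h)
      · exact absurd hx.2 (not_le.mpr h.1)
      · have := hx.2; have := h.1; linarith
    have hd2 : Disjoint (Ioo (y - a) (y + a)) (Ico (y + a) (y + b)) := by
      rw [Set.disjoint_left]
      rintro x hx h
      exact absurd h.1 (not_le.mpr hx.2)
    have hmeas2 : MeasurableSet (Ioo (y - a) (y + a) ∪ Ico (y + a) (y + b)) :=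
      measurableSet_Ioo.union measurableSet_Ico
    have hstep : f y b ≤ (∫ x in Ioc (y - b) (y - a), ‖u x‖ ^ 2)
        + ((∫ x in Ioo (y - a) (y + a), ‖u x‖ ^ 2)
          + ∫ x in Ico (y + a) (y + b), ‖u x‖ ^ 2) := by
      have h1 : f y b ≤ ∫ x in
          (Ioc (y - b) (y - a) ∪ (Ioo (y - a) (y + a) ∪ Ico (y + a) (y + b))),
          ‖u x‖ ^ 2 := by
        apply setIntegral_mono_set hInt.integrableOn (ae_of_all _ hnonneg)
        exact HasSubset.Subset.eventuallyLE hsub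
      rw [setIntegral_union hd1 hmeas2 hInt.integrableOn hInt.integrableOn,
        setIntegral_union hd2 measurableSet_Ico hInt.integrableOn hInt.integrableOn] at h1
      exact h1
    have hΔ : 0 ≤ b - a := by linarith
    have hside1 : ∫ x in Ioc (y - b) (y - a), ‖u x‖ ^ 2 ≤ N ^ 2 * (b - a) ^ ((r - 2) / r) := by
      apply holder_piece hr hu2 hur hΔ
      rw [Real.volume_Ioc]
      apply ENNReal.ofReal_le_ofReal; linarith
    have hside2 : ∫ x in Ico (y + a) (y + b), ‖u x‖ ^ 2 ≤ N ^ 2 * (b - a) ^ ((r - 2) / r) := by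
      apply holder_piece hr hu2 hur hΔ
      rw [Real.volume_Ico]
      apply ENNReal.ofReal_le_ofReal; linarith
    have hmid : ∫ x in Ioo (y - a) (y + a), ‖u x‖ ^ 2 ≤ concentration u a :=
      le_ciSup (hBdd a) y
    calc f y b ≤ (∫ x in Ioc (y - b) (y - a), ‖u x‖ ^ 2)
        + ((∫ x in Ioo (y - a) (y + a), ‖u x‖ ^ 2)
          + ∫ x in Ico (y + a) (y + b), ‖u x‖ ^ 2) := hstep
      _ ≤ N ^ 2 * (b - a) ^ ((r - 2) / r)
          + (concentration u a + N ^ 2 * (b - a) ^ ((r - 2) / r)) := by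
        gcongr
      _ = concentration u a + 2 * N ^ 2 * (b - a) ^ ((r - 2) / r) := by ring
  -- conclude, by cases on s ≤ t
  rcases le_total s t with hst | hst
  · have h1 : concentration u t - concentration u s ≤ 2 * N ^ 2 * (t - s) ^ ((r - 2) / r) := by
      have := key s t hs hst
      linarith
    have h2 : 0 ≤ concentration u t - concentration u s := by
      have := hmono s t hst; linarith
    rw [abs_of_nonneg h2, abs_of_nonneg (by linarith : (0:ℝ) ≤ t - s)]
    exact h1
  · have h1 : concentration u s - concentration u t ≤ 2 * N ^ 2 * (s - t) ^ ((r - 2) / r) := by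
      have := key t s ht hst
      linarith
    have h2 : 0 ≤ concentration u s - concentration u t := by
      have := hmono t s hst; linarith
    rw [abs_sub_comm, abs_of_nonneg h2, abs_sub_comm, abs_of_nonneg (by linarith : (0:ℝ) ≤ s - t)]
    exact h1
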